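/- Let G be a finite group with subgroups B ≤ P_J, P_K ≤ G and an element n ∈ G such that P_K n P_J = P_K n B (every (P_K, P_J)-double coset element decomposes through B on the right). Then for any x ∈ G, the number of cosets P_K h contained in P_K n P_J x equals |P_K n P_J| / |P_K|, and each coset Bg ⊆ P_K n P_J x lies in exactly one such P_K h; consequently the number of cosets Bg ⊆ BnB x contained in a fixed P_K h ⊆ P_K n P_J x is independent of the choice of h. -/
import Mathlib

variable {G : Type*} [Group G]

/-- The right coset `H·g` of a subgroup `H`, as a set. -/
def rCoset (H : Subgroup G) (g : G) : Set G := (fun h => h * g) '' (H : Set G)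

lemma mem_rCoset_self (H : Subgroup G) (g : G) : g ∈ rCoset H g :=
  ⟨1, H.one_mem, one_mul g⟩

lemma mem_rCoset_iff (H : Subgroup G) (g a : G) : a ∈ rCoset H g ↔ a * g⁻¹ ∈ H := by
  constructor
  · rintro ⟨h, hh, rfl⟩; simpa using hh
  · intro h; exact ⟨a * g⁻¹, h, by group⟩

lemma rCoset_eq_of_mem {H : Subgroup G} {g a : G} (ha : a ∈ rCoset H g) :
    rCoset H a = rCoset H g := by
  rw [mem_rCoset_iff] at ha
  ext b
  rw [mem_rCoset_iff, mem_rCoset_iff]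
  constructor
  · intro hb
    have := H.mul_mem hb ha
    have e : b * a⁻¹ * (a * g⁻¹) = b * g⁻¹ := by group
    rwa [e] at this
  · intro hb
    have := H.mul_mem hb (H.inv_mem ha)
    have e : b * g⁻¹ * (a * g⁻¹)⁻¹ = b * a⁻¹ := by group
    rwa [e] at this

lemma card_rCoset (H : Subgroup G) (g : G) : Nat.card (rCoset H g) = Nat.card H := by
  unfold rCoset
  rw [Nat.card_image_of_injective (mul_left_injective g)]
  simp [Nat.card_congr (Equiv.setCongr rfl)]

/-- Let `G` be a finite group, `B ≤ P_J`, `B ≤ P_K` subgroups, and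
`n ∈ G` with `P_K n P_J = P_K n B`.  Then for any `x ∈ G`:
(1) the number of cosets `P_K h ⊆ P_K n P_J x` equals `|P_K n P_J| / |P_K|`;
(2) each coset `Bg ⊆ P_K n P_J x` lies in exactly one such coset `P_K h`;
(3) the number of cosets `Bg ⊆ BnBx` contained in a fixed `P_K h ⊆ P_K n P_J x`
is independent of the choice of `h`. -/
theorem stmt17 [Finite G] (B PJ PK : Subgroup G)
    (hBJ : B ≤ PJ) (hBK : B ≤ PK) (n : G)
    (D : Set G) (hD : D = {g | ∃ a ∈ PK, ∃ b ∈ PJ, g = a * n * b})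
    (hDB : D = {g | ∃ a ∈ PK, ∃ b ∈ B, g = a * n * b})
    (x : G)
    (Dx : Set G) (hDx : Dx = (fun g => g * x) '' D)
    (BnBx : Set G) (hBnBx : BnBx = {g | ∃ b₁ ∈ B, ∃ b₂ ∈ B, g = b₁ * n * b₂ * x}) :
    (Nat.card {s : Set G | (∃ h, s = rCoset PK h) ∧ s ⊆ Dx} =
        Nat.card D / Nat.card PK) ∧
    (∀ g : G, rCoset B g ⊆ Dx →
        ∃! s : Set G, (∃ h, s = rCoset PK h) ∧ s ⊆ Dx ∧ rCoset B g ⊆ s) ∧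
    (∀ h₁ h₂ : G, rCoset PK h₁ ⊆ Dx → rCoset PK h₂ ⊆ Dx →
        Nat.card {s : Set G | (∃ g, s = rCoset B g) ∧ s ⊆ BnBx ∧ s ⊆ rCoset PK h₁} =
        Nat.card {s : Set G | (∃ g, s = rCoset B g) ∧ s ⊆ BnBx ∧ s ⊆ rCoset PK h₂}) := by
  classical
  have hDxB : Dx = {g | ∃ a ∈ PK, ∃ b ∈ B, g = a * n * b * x} := by
    rw [hDx, hDB]
    ext g
    constructor
    · rintro ⟨d, ⟨a, ha, b, hb, rfl⟩, rfl⟩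
      exact ⟨a, ha, b, hb, rfl⟩
    · rintro ⟨a, ha, b, hb, rfl⟩
      exact ⟨a * n * b, ⟨a, ha, b, hb, rfl⟩, rfl⟩
  have hInv : ∀ k ∈ PK, ∀ a ∈ Dx, k * a ∈ Dx := by
    rw [hDxB]
    rintro k hk a ⟨p, hp, b, hb, rfl⟩
    exact ⟨k * p, mul_mem hk hp, b, hb, by group⟩
  have hCosetSub : ∀ h ∈ Dx, rCoset PK h ⊆ Dx := by
    rintro h hh _ ⟨k, hk, rfl⟩
    exact hInv k hk h hh
  refine ⟨?_, ?_, ?_⟩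
  · -- Part 1
    haveI := Fintype.ofFinite G
    have hC : {s : Set G | (∃ h, s = rCoset PK h) ∧ s ⊆ Dx} = (fun g => rCoset PK g) '' Dx := by
      ext s
      constructor
      · rintro ⟨⟨h, rfl⟩, hsub⟩
        exact ⟨h, hsub (mem_rCoset_self PK h), rfl⟩
      · rintro ⟨g, hg, rfl⟩
        exact ⟨⟨g, rfl⟩, hCosetSub g hg⟩
    have hDD : Nat.card D = Nat.card Dx := by
      rw [hDx, Nat.card_image_of_injective (mul_left_injective x)]
    rw [hC, hDD]
    set f : G → Set G := fun g => rCoset PK g with hf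
    set s : Finset G := Dx.toFinset with hs
    have hcard1 : Nat.card Dx = s.card := by
      rw [Nat.card_coe_set_eq, Set.ncard_eq_toFinset_card']
    set T : Finset (Set G) := s.image f with hT
    have hmaps : ∀ g ∈ s, f g ∈ T := fun g hg => Finset.mem_image_of_mem f hg
    have hsum := Finset.card_eq_sum_card_fiberwise hmaps
    have hfiber : ∀ c ∈ T, (s.filter (fun g => f g = c)).card = Nat.card PK := by
      intro c hc
      obtain ⟨h, hh, rfl⟩ := Finset.mem_image.mp hc
      have hhDx : h ∈ Dx := Set.mem_toFinset.mp hh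
      have heq : (s.filter (fun g => f g = f h)) = (rCoset PK h).toFinset := by
        ext g
        simp only [Finset.mem_filter, Set.mem_toFinset, hs]
        constructor
        · rintro ⟨-, he⟩
          have := mem_rCoset_self PK g
          rwa [show rCoset PK g = f g from rfl, he] at this
        · intro hg
          exact ⟨hCosetSub h hhDx hg, rCoset_eq_of_mem hg⟩
      rw [heq, ← Set.ncard_eq_toFinset_card', ← Nat.card_coe_set_eq, card_rCoset]
    rw [Finset.sum_congr rfl hfiber, Finset.sum_const, smul_eq_mul] at hsum
    have himg : Nat.card (f '' Dx) = T.card := by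
      have : f '' Dx = ↑T := by rw [hT, Finset.coe_image, hs, Set.coe_toFinset]
      rw [this, Nat.card_coe_set_eq, Set.ncard_coe_finset]
    rw [hcard1, hsum, himg, Nat.mul_div_cancel _ Nat.card_pos]
  · -- Part 2
    intro g hg
    have hgDx : g ∈ Dx := hg (mem_rCoset_self B g)
    refine ⟨rCoset PK g, ⟨⟨g, rfl⟩, hCosetSub g hgDx, ?_⟩, ?_⟩
    · rintro _ ⟨b, hb, rfl⟩
      exact ⟨b, hBK hb, rfl⟩
    · rintro t ⟨⟨h, rfl⟩, hsD, hBs⟩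
      exact (rCoset_eq_of_mem (hBs (mem_rCoset_self B g))).symm
  · -- Part 3
    intro h₁ h₂ hs₁ hs₂
    obtain ⟨a₁, ha₁, b₁, hb₁, he₁⟩ := hDxB ▸ hs₁ (mem_rCoset_self PK h₁)
    obtain ⟨a₂, ha₂, b₂, hb₂, he₂⟩ := hDxB ▸ hs₂ (mem_rCoset_self PK h₂)
    subst he₁ he₂
    have main : ∀ (a a' bb bb' : G), a ∈ PK → a' ∈ PK → bb ∈ B → bb' ∈ B →
        ∀ s : Set G, ((∃ g, s = rCoset B g) ∧ s ⊆ BnBx ∧ s ⊆ rCoset PK (a * n * bb * x)) →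
        ((∃ g, (fun c => c * (x⁻¹ * bb⁻¹ * bb' * x)) '' s = rCoset B g) ∧
          (fun c => c * (x⁻¹ * bb⁻¹ * bb' * x)) '' s ⊆ BnBx ∧
          (fun c => c * (x⁻¹ * bb⁻¹ * bb' * x)) '' s ⊆ rCoset PK (a' * n * bb' * x)) := by
      rintro a a' bb bb' ha ha' hbb hbb' sS ⟨⟨g, rfl⟩, hBn, hPKs⟩
      refine ⟨⟨g * (x⁻¹ * bb⁻¹ * bb' * x), ?_⟩, ?_, ?_⟩
      · unfold rCoset
        rw [Set.image_image]
        simp only [mul_assoc]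
      · rintro _ ⟨c, hc, rfl⟩
        obtain ⟨β₁, hβ₁, β₂, hβ₂, rfl⟩ := hBnBx ▸ hBn hc
        exact hBnBx ▸ ⟨β₁, hβ₁, β₂ * bb⁻¹ * bb',
          mul_mem (mul_mem hβ₂ (inv_mem hbb)) hbb', by group⟩
      · rintro _ ⟨c, hc, rfl⟩
        obtain ⟨k, hk, rfl⟩ := hPKs hc
        exact ⟨k * a * a'⁻¹, mul_mem (mul_mem hk ha) (inv_mem ha'), by group⟩
    have comp : ∀ (bb bb' : G) (sS : Set G),
        (fun c => c * (x⁻¹ * bb'⁻¹ * bb * x)) ''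
          ((fun c => c * (x⁻¹ * bb⁻¹ * bb' * x)) '' sS) = sS := by
      intro bb bb' sS
      rw [Set.image_image]
      have : ∀ c : G, c * (x⁻¹ * bb⁻¹ * bb' * x) * (x⁻¹ * bb'⁻¹ * bb * x) = c := by
        intro c; group
      simp only [this, Set.image_id']
    exact Nat.card_congr
      { toFun := fun s => ⟨_, main a₁ a₂ b₁ b₂ ha₁ ha₂ hb₁ hb₂ s.1 s.2⟩
        invFun := fun s => ⟨_, main a₂ a₁ b₂ b₁ ha₂ ha₁ hb₂ hb₁ s.1 s.2⟩
        left_inv := fun s => Subtype.ext (comp b₁ b₂ s.1)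
        right_inv := fun s => Subtype.ext (comp b₂ b₁ s.1) }
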